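/- Let G be a graph obtained as the join R0 + (R1 ∪ … ∪ R_{2n+1}), where R0 is a complete graph of order n and each R_i (1 ≤ i ≤ 2n+1) has order 2k+1, contains no path of order 2k+1, and hence has no {P2,P_{2k+1}}-factor. Then G has no {P2,P_{2k+1}}-factor. -/
import Mathlib


open SimpleGraph

/-- `cCount H i` is the number of connected components of `H` with exactly `i` vertices. -/
noncomputable def cCount {V : Type*} (H : SimpleGraph V) (i : ℕ) : ℕ :=
  Nat.card {c : H.ConnectedComponent // Nat.card c.supp = i}

/-- The component `c` of `F` is (induces) a path of order `n`. -/
def IsPathComp {V : Type*} (F : SimpleGraph V) (n : ℕ) (c : F.ConnectedComponent) : Prop :=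
  Nonempty ((SimpleGraph.induce c.supp F) ≃g SimpleGraph.pathGraph n)

/-- `G` has a spanning subgraph each of whose components is a path of order in `ns`. -/
def HasPathFamilyFactor {V : Type*} (G : SimpleGraph V) (ns : Set ℕ) : Prop :=
  ∃ F ≤ G, ∀ c : F.ConnectedComponent, ∃ n ∈ ns, IsPathComp F n c

/-- `F` is a path-factor of `G`: a spanning subgraph each of whose components is a
path of order at least `2`. -/
def IsPathFactor {V : Type*} (G F : SimpleGraph V) : Prop :=
  F ≤ G ∧ ∀ c : F.ConnectedComponent, ∃ n, 2 ≤ n ∧ IsPathComp F n c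

/-- The neighbourhood `N_G(X)`: vertices outside `X` adjacent to some vertex of `X`. -/
def nbhd {V : Type*} (G : SimpleGraph V) (X : Set V) : Set V :=
  {v | v ∉ X ∧ ∃ u ∈ X, G.Adj u v}

/-- The join of a complete graph of order `n` with the disjoint union of the graphs
`R i` (`i < 2n+1`), each on `2k+1` vertices. -/
def joinGraph (n k : ℕ) (R : Fin (2 * n + 1) → SimpleGraph (Fin (2 * k + 1))) :
    SimpleGraph (Fin n ⊕ Fin (2 * n + 1) × Fin (2 * k + 1)) :=
  SimpleGraph.fromRel (fun u v =>
    (∃ a b : Fin n, u = Sum.inl a ∧ v = Sum.inl b) ∨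
    (∃ (a : Fin n) (p : Fin (2 * n + 1) × Fin (2 * k + 1)), u = Sum.inl a ∧ v = Sum.inr p) ∨
    (∃ (i : Fin (2 * n + 1)) (x y : Fin (2 * k + 1)),
      u = Sum.inr (i, x) ∧ v = Sum.inr (i, y) ∧ (R i).Adj x y))


private lemma walk_closed {V : Type*} {F : SimpleGraph V} {S : Set V}
    (hS : ∀ u w, u ∈ S → F.Adj u w → w ∈ S) :
    ∀ {a b : V}, F.Walk a b → a ∈ S → b ∈ S := by
  intro a b p
  induction p with
  | nil => exact id
  | cons h p ih => exact fun ha => ih (hS _ _ ha h)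

private lemma no_three_nbrs {V : Type*} {F : SimpleGraph V}
    (hcomp : ∀ c : F.ConnectedComponent, ∃ m, IsPathComp F m c)
    {v w1 w2 w3 : V} (h1 : F.Adj v w1) (h2 : F.Adj v w2) (h3 : F.Adj v w3)
    (h12 : w1 ≠ w2) (h13 : w1 ≠ w3) (h23 : w2 ≠ w3) : False := by
  set c := F.connectedComponentMk v with hc
  obtain ⟨m, ⟨e⟩⟩ := hcomp c
  have hv : v ∈ c.supp := by simp [c, ConnectedComponent.mem_supp_iff]
  have hw : ∀ w, F.Adj v w → w ∈ c.supp := by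
    intro w h
    simp only [ConnectedComponent.mem_supp_iff, hc]
    exact ConnectedComponent.sound h.symm.reachable
  have hadj : ∀ (w) (h : F.Adj v w),
      (SimpleGraph.induce c.supp F).Adj ⟨v, hv⟩ ⟨w, hw w h⟩ := by
    intro w h; simpa [SimpleGraph.induce] using h
  have hP : ∀ (w) (h : F.Adj v w),
      (pathGraph m).Adj (e ⟨v, hv⟩) (e ⟨w, hw w h⟩) := by
    intro w h; exact e.map_rel_iff.mpr (hadj w h)
  have hne : ∀ (wa wb) (ha : F.Adj v wa) (hb : F.Adj v wb), wa ≠ wb →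
      ((e ⟨wa, hw wa ha⟩ : Fin m) : ℕ) ≠ ((e ⟨wb, hw wb hb⟩ : Fin m) : ℕ) := by
    intro wa wb ha hb hab h
    exact hab (congrArg Subtype.val (e.injective (Fin.ext h)))
  have p1 := (pathGraph_adj).mp (hP w1 h1)
  have p2 := (pathGraph_adj).mp (hP w2 h2)
  have p3 := (pathGraph_adj).mp (hP w3 h3)
  have n12 := hne w1 w2 h1 h2 h12
  have n13 := hne w1 w3 h1 h3 h13
  have n23 := hne w2 w3 h2 h3 h23
  omega

/-- if no `R i` contains a path of order `2k+1` (hence none has a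
`{P₂, P_{2k+1}}`-factor), then the join graph has no `{P₂, P_{2k+1}}`-factor. -/
theorem stmt16 (n k : ℕ) (R : Fin (2 * n + 1) → SimpleGraph (Fin (2 * k + 1)))
    (hnopath : ∀ i, ¬ ∃ f : Fin (2 * k + 1) → Fin (2 * k + 1), Function.Injective f ∧
      ∀ a b, (SimpleGraph.pathGraph (2 * k + 1)).Adj a b → (R i).Adj (f a) (f b))
    (hnofactor : ∀ i, ¬ HasPathFamilyFactor (R i) {2, 2 * k + 1}) :
    ¬ HasPathFamilyFactor (joinGraph n k R) {2, 2 * k + 1} := by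
  classical
  rintro ⟨F, hFG, hcomp⟩
  -- adjacency inside a part comes from `R i`
  have hRadj : ∀ (i : Fin (2 * n + 1)) (x y : Fin (2 * k + 1)),
      F.Adj (Sum.inr (i, x)) (Sum.inr (i, y)) → (R i).Adj x y := by
    intro i x y h
    have hG := hFG h
    simp only [joinGraph, fromRel_adj] at hG
    obtain ⟨-, h' | h'⟩ := hG
    · rcases h' with ⟨a, b, h1, -⟩ | ⟨a, p, h1, -⟩ | ⟨i', x', y', h1, h2, h3⟩
      · exact absurd h1 (by simp)
      · exact absurd h1 (by simp)
      · simp only [Sum.inr.injEq, Prod.mk.injEq] at h1 h2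
        obtain ⟨rfl, rfl⟩ := h1; obtain ⟨-, rfl⟩ := h2; exact h3
    · rcases h' with ⟨a, b, h1, -⟩ | ⟨a, p, h1, -⟩ | ⟨i', x', y', h1, h2, h3⟩
      · exact absurd h1 (by simp)
      · exact absurd h1 (by simp)
      · simp only [Sum.inr.injEq, Prod.mk.injEq] at h1 h2
        obtain ⟨rfl, rfl⟩ := h1; obtain ⟨-, rfl⟩ := h2; exact h3.symm
  haveI : Fintype F.ConnectedComponent := Fintype.ofFinite _
  -- Step 1: every part sends an F-edge to the left side
  have step1 : ∀ i : Fin (2 * n + 1), ∃ (x : Fin (2 * k + 1)) (a : Fin n),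
      F.Adj (Sum.inr (i, x)) (Sum.inl a) := by
    intro i
    by_contra hno
    push_neg at hno
    set S : Set (Fin n ⊕ Fin (2 * n + 1) × Fin (2 * k + 1)) :=
      {v | ∃ y, v = Sum.inr (i, y)} with hSdef
    have hclosed : ∀ u w, u ∈ S → F.Adj u w → w ∈ S := by
      rintro u w ⟨y, rfl⟩ hadj
      have hG := hFG hadj
      simp only [joinGraph, fromRel_adj] at hG
      obtain ⟨-, h' | h'⟩ := hG
      · rcases h' with ⟨a, b, h1, -⟩ | ⟨a, p, h1, -⟩ | ⟨i', x', y', h1, h2, h3⟩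
        · exact absurd h1 (by simp)
        · exact absurd h1 (by simp)
        · simp only [Sum.inr.injEq, Prod.mk.injEq] at h1
          obtain ⟨rfl, rfl⟩ := h1
          exact ⟨y', h2⟩
      · rcases h' with ⟨a, b, h1, h2⟩ | ⟨a, p, h1, h2⟩ | ⟨i', x', y', h1, h2, h3⟩
        · exact absurd h2 (by simp)
        · obtain rfl := h1
          exact absurd hadj (hno y a)
        · simp only [Sum.inr.injEq, Prod.mk.injEq] at h2
          obtain ⟨rfl, rfl⟩ := h2
          exact ⟨x', h1⟩
    have hsub : ∀ v ∈ S, ∀ w, F.connectedComponentMk w = F.connectedComponentMk v →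
        w ∈ S := by
      intro v hv w hw
      obtain ⟨p⟩ := ConnectedComponent.exact hw.symm
      exact walk_closed hclosed p hv
    set P : Finset (Fin n ⊕ Fin (2 * n + 1) × Fin (2 * k + 1)) :=
      Finset.univ.filter (· ∈ S) with hPdef
    have hPcard : P.card = 2 * k + 1 := by
      have himg : P = Finset.univ.image
          (fun y : Fin (2 * k + 1) =>
            (Sum.inr (i, y) : Fin n ⊕ Fin (2 * n + 1) × Fin (2 * k + 1))) := by
        ext v
        simp [hPdef, hSdef, eq_comm]
      rw [himg, Finset.card_image_of_injective _ (by
        intro a b h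
        simpa using h)]
      simp
    have hsum := Finset.card_eq_sum_card_fiberwise
      (f := F.connectedComponentMk) (s := P) (t := Finset.univ)
      (fun x _ => Finset.mem_univ _)
    have heven : ∀ c ∈ (Finset.univ : Finset F.ConnectedComponent),
        Even ((P.filter (fun v => F.connectedComponentMk v = c)).card) := by
      intro c _
      rcases (P.filter (fun v => F.connectedComponentMk v = c)).eq_empty_or_nonempty with
        he | ⟨v, hv⟩
      · simp [he]
      · rw [Finset.mem_filter] at hv
        have hvS : v ∈ S := by
          have := hv.1; simpa [hPdef] using this
        have hfib : ∀ w, w ∈ P.filter (fun v => F.connectedComponentMk v = c) ↔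
            w ∈ c.supp := by
          intro w
          simp only [Finset.mem_filter, ConnectedComponent.mem_supp_iff, hPdef,
            Finset.mem_univ, true_and, Finset.mem_filter]
          constructor
          · rintro ⟨-, h⟩; exact h
          · intro h
            refine ⟨?_, h⟩
            exact hsub v hvS w (by rw [h, ← hv.2])
        obtain ⟨m, hm, ⟨e⟩⟩ := hcomp c
        have hcardsupp : Nat.card c.supp = m := by
          rw [Nat.card_congr e.toEquiv, Nat.card_eq_fintype_card, Fintype.card_fin]
        have hfibcard : (P.filter (fun v => F.connectedComponentMk v = c)).card = m := by
          have heq : P.filter (fun v => F.connectedComponentMk v = c) = c.supp.toFinset := by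
            ext w; rw [hfib, Set.mem_toFinset]
          rw [heq, ← Set.ncard_eq_toFinset_card', ← Nat.card_coe_set_eq, hcardsupp]
        simp only [Set.mem_insert_iff, Set.mem_singleton_iff] at hm
        rcases hm with rfl | rfl
        · rw [hfibcard]; exact even_two
        · -- a path of order 2k+1 inside part i: contradiction with hnopath
          exfalso
          apply hnopath i
          have hmemS : ∀ j : Fin (2 * k + 1), ∃ y, (e.symm j).val = Sum.inr (i, y) := by
            intro j
            have hmem : (e.symm j).val ∈ S := by
              apply hsub v hvS
              have h2 := (e.symm j).2
              rw [ConnectedComponent.mem_supp_iff] at h2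
              rw [h2, ← hv.2]
            simpa [hSdef] using hmem
          choose f hf using hmemS
          refine ⟨f, ?_, ?_⟩
          · intro j1 j2 h
            apply e.symm.injective
            apply Subtype.ext
            rw [hf j1, hf j2, h]
          · intro a b hab
            have hadj : (SimpleGraph.induce c.supp F).Adj (e.symm a) (e.symm b) :=
              e.symm.map_rel_iff.mpr hab
            have hFadj : F.Adj (e.symm a).val (e.symm b).val := hadj
            rw [hf a, hf b] at hFadj
            exact hRadj i _ _ hFadj
    have hev : Even (2 * k + 1) := by
      rw [← hPcard, hsum]
      exact Finset.even_sum _ heven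
    obtain ⟨t, ht⟩ := hev
    omega
  -- Step 2: pigeonhole on the left side
  choose x a hxa using step1
  obtain ⟨a0, ha0⟩ := Fintype.exists_lt_card_fiber_of_mul_lt_card a (n := 2) (by
    simp only [Fintype.card_fin]; omega)
  rw [Finset.two_lt_card] at ha0
  obtain ⟨i1, hi1, i2, hi2, i3, hi3, h12, h13, h23⟩ := ha0
  have ha1 : a i1 = a0 := (Finset.mem_filter.mp hi1).2
  have ha2 : a i2 = a0 := (Finset.mem_filter.mp hi2).2
  have ha3 : a i3 = a0 := (Finset.mem_filter.mp hi3).2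
  have hcomp' : ∀ c : F.ConnectedComponent, ∃ m, IsPathComp F m c := by
    intro c; obtain ⟨m, -, h⟩ := hcomp c; exact ⟨m, h⟩
  refine no_three_nbrs hcomp' (v := Sum.inl a0)
    (w1 := Sum.inr (i1, x i1)) (w2 := Sum.inr (i2, x i2)) (w3 := Sum.inr (i3, x i3))
    ?_ ?_ ?_ ?_ ?_ ?_
  · have := (hxa i1).symm; rwa [ha1] at this
  · have := (hxa i2).symm; rwa [ha2] at this
  · have := (hxa i3).symm; rwa [ha3] at this
  · simp only [ne_eq, Sum.inr.injEq, Prod.mk.injEq, not_and]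
    exact fun h _ => absurd h h12
  · simp only [ne_eq, Sum.inr.injEq, Prod.mk.injEq, not_and]
    exact fun h _ => absurd h h13
  · simp only [ne_eq, Sum.inr.injEq, Prod.mk.injEq, not_and]
    exact fun h _ => absurd h h23
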